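/- For every word w ∈ {+,0,-}^{3n} with exactly n of each letter such that every prefix contains at least as many +'s as 0's and at least as many 0's as -'s, there exists an M-diagram on 3n points whose boundary word is w; combined with injectivity, M-diagrams on 3n points are in bijection with standard Young tableaux of shape (n,n,n). -/

import Mathlib

/-- An M-diagram on `3n` points: a partition of `Fin (3n)` into `n` triples,
recorded by assigning to each point `i` the left (`a i`), middle (`b i`) and
right (`c i`) endpoints of the triple containing `i`, such that no two left
arcs `(a,b)` cross and no two right arcs `(b,c)` cross. -/
structure MDiagram (n : ℕ) where
  a : Fin (3 * n) → Fin (3 * n)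
  b : Fin (3 * n) → Fin (3 * n)
  c : Fin (3 * n) → Fin (3 * n)
  hab : ∀ i, a i < b i
  hbc : ∀ i, b i < c i
  mem_triple : ∀ i, i = a i ∨ i = b i ∨ i = c i
  coherent : ∀ i j, (j = a i ∨ j = b i ∨ j = c i) →
    a j = a i ∧ b j = b i ∧ c j = c i
  noncrossL : ∀ i j, ¬ (a i < a j ∧ a j < b i ∧ b i < b j)
  noncrossR : ∀ i j, ¬ (b i < b j ∧ b j < c i ∧ c i < c j)

/-- The boundary word of an M-diagram: `+` (= `2 : Fin 3`) at left endpoints,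
`0` (= `1`) at middle endpoints, `-` (= `0`) at right endpoints. -/
def mword {n : ℕ} (m : MDiagram n) : Fin (3 * n) → Fin 3 :=
  fun i => if i = m.a i then 2 else if i = m.b i then 1 else 0

/-- A standard Young tableau of rectangular shape `(n,n,n)`. -/
structure SYT3 (n : ℕ) where
  entry : Fin 3 → Fin n → Fin (3 * n)
  bij : Function.Bijective (fun p : Fin 3 × Fin n => entry p.1 p.2)
  row_inc : ∀ i : Fin 3, StrictMono (entry i)
  col_inc : ∀ j : Fin n, StrictMono (fun i : Fin 3 => entry i j)

/-- Number of occurrences of the letter `ℓ` among the first `k` letters of `w`. -/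
def pcount {n : ℕ} (w : Fin (3 * n) → Fin 3) (k : ℕ) (ℓ : Fin 3) : ℕ :=
  (Finset.univ.filter (fun i : Fin (3 * n) => i.val < k ∧ w i = ℓ)).card

/-- Lattice condition: every prefix has `#(+) ≥ #(0) ≥ #(-)`. -/
def IsLatticeWord {n : ℕ} (w : Fin (3 * n) → Fin 3) : Prop :=
  ∀ k : ℕ, pcount w k 1 ≤ pcount w k 2 ∧ pcount w k 0 ≤ pcount w k 1

namespace MProof
open Finset

variable {n : ℕ} {w : Fin (3 * n) → Fin 3}

lemma fin3_cases (x : Fin 3) : x = 0 ∨ x = 1 ∨ x = 2 := by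
  rcases x with ⟨v, hv⟩
  interval_cases v <;> simp [Fin.ext_iff]

lemma pcount_succ_of_lt {k : ℕ} (hk : k < 3 * n) (ℓ : Fin 3) :
    pcount w (k + 1) ℓ = pcount w k ℓ + if w ⟨k, hk⟩ = ℓ then 1 else 0 := by
  classical
  unfold pcount
  have hsplit : (Finset.univ.filter (fun i : Fin (3 * n) => i.val < k + 1 ∧ w i = ℓ))
      = (Finset.univ.filter (fun i : Fin (3 * n) => i.val < k ∧ w i = ℓ)) ∪
        (Finset.univ.filter (fun i : Fin (3 * n) => i.val = k ∧ w i = ℓ)) := by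
    rw [← Finset.filter_or]
    apply Finset.filter_congr
    intro i _
    constructor
    · rintro ⟨h1, h2⟩
      rcases Nat.lt_succ_iff_lt_or_eq.1 h1 with h | h
      · exact Or.inl ⟨h, h2⟩
      · exact Or.inr ⟨h, h2⟩
    · rintro (⟨h1, h2⟩ | ⟨h1, h2⟩)
      · exact ⟨Nat.lt_succ_of_lt h1, h2⟩
      · exact ⟨by omega, h2⟩
  rw [hsplit, Finset.card_union_of_disjoint]
  · congr 1
    have : (Finset.univ.filter (fun i : Fin (3 * n) => i.val = k ∧ w i = ℓ))
        = if w ⟨k, hk⟩ = ℓ then {⟨k, hk⟩} else ∅ := by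
      ext i
      split_ifs with h
      · simp only [Finset.mem_filter, Finset.mem_univ, true_and, Finset.mem_singleton]
        constructor
        · rintro ⟨h1, _⟩; exact Fin.ext h1
        · rintro rfl; exact ⟨rfl, h⟩
      · simp only [Finset.mem_filter, Finset.mem_univ, true_and, Finset.notMem_empty,
          iff_false, not_and]
        intro h1
        have : i = ⟨k, hk⟩ := Fin.ext h1
        subst this; exact h
    rw [this]
    split_ifs <;> simp
  · rw [Finset.disjoint_left]
    intro i hi hi'
    simp only [Finset.mem_filter] at *
    omega

lemma pcount_succ_of_ge {k : ℕ} (hk : 3 * n ≤ k) (ℓ : Fin 3) :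
    pcount w (k + 1) ℓ = pcount w k ℓ := by
  unfold pcount
  congr 1
  apply Finset.filter_congr
  intro i _
  have := i.isLt
  constructor <;> rintro ⟨h1, h2⟩ <;> exact ⟨by omega, h2⟩

lemma pcount_mono {k k' : ℕ} (h : k ≤ k') (ℓ : Fin 3) :
    pcount w k ℓ ≤ pcount w k' ℓ := by
  apply Finset.card_le_card
  intro i hi
  simp only [Finset.mem_filter] at *
  exact ⟨hi.1, by omega, hi.2.2⟩

lemma pcount_of_ge {k : ℕ} (hk : 3 * n ≤ k)
    (hcnt : ∀ ℓ : Fin 3, (Finset.univ.filter (fun i => w i = ℓ)).card = n) (ℓ : Fin 3) :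
    pcount w k ℓ = n := by
  unfold pcount
  have : (Finset.univ.filter (fun i : Fin (3 * n) => i.val < k ∧ w i = ℓ))
      = (Finset.univ.filter (fun i : Fin (3 * n) => w i = ℓ)) := by
    apply Finset.filter_congr
    intro i _
    have := i.isLt
    constructor
    · rintro ⟨_, h⟩; exact h
    · intro h; exact ⟨by omega, h⟩
  rw [this, hcnt]

lemma pcount_add_interval {p q : ℕ} (hpq : p ≤ q) (ℓ : Fin 3) :
    pcount w q ℓ = pcount w p ℓ +
      (Finset.univ.filter (fun i : Fin (3 * n) => p ≤ i.val ∧ i.val < q ∧ w i = ℓ)).card := by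
  classical
  unfold pcount
  rw [← Finset.card_union_of_disjoint, ← Finset.filter_or]
  · congr 1
    apply Finset.filter_congr
    intro i _
    constructor
    · rintro ⟨h1, h2⟩
      rcases Nat.lt_or_ge i.val p with h | h
      · exact Or.inl ⟨h, h2⟩
      · exact Or.inr ⟨h, h1, h2⟩
    · rintro (⟨h1, h2⟩ | ⟨h1, h2, h3⟩)
      · exact ⟨by omega, h2⟩
      · exact ⟨h2, h3⟩
  · rw [Finset.disjoint_left]
    intro i hi hi'
    simp only [Finset.mem_filter] at *
    omega


/-! ### The height function and last-ascent lemma -/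

lemma lastAscent (F : ℕ → ℤ) (hstep : ∀ k, F (k + 1) ≤ F k + 1) {s t : ℕ}
    (hst : s ≤ t) (h : F s < F t) :
    ∃ r, s ≤ r ∧ r < t ∧ F r = F t - 1 ∧ F (r + 1) = F t := by
  classical
  have hst' : s < t := by
    rcases lt_or_eq_of_le hst with h' | h'
    · exact h'
    · subst h'; exact absurd h (lt_irrefl _)
  set S := (Finset.range t).filter (fun r => s ≤ r ∧ F r < F t) with hS
  have hne : S.Nonempty := ⟨s, by simp [hS, Finset.mem_filter, Finset.mem_range, hst', h]⟩
  set r := S.max' hne with hr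
  have hrS : r ∈ S := S.max'_mem hne
  simp only [hS, Finset.mem_filter, Finset.mem_range] at hrS
  obtain ⟨hrt, hsr, hrF⟩ := hrS
  have h1 : F (r + 1) = F t := by
    rcases Nat.lt_or_ge (r + 1) t with hl | hg
    · have hnot : r + 1 ∉ S := by
        intro hmem
        have := S.le_max' _ hmem
        omega
      have : ¬ F (r + 1) < F t := by
        intro hbad
        exact hnot (by simp [hS, Finset.mem_filter, Finset.mem_range, hl, hbad]; omega)
      have h2 := hstep r
      omega
    · have : r + 1 = t := by omega
      rw [this]
  refine ⟨r, hsr, hrt, ?_, h1⟩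
  have h2 := hstep r
  omega

section Matching

variable (w : Fin (3 * n) → Fin 3) (hi lo : Fin 3)

/-- Prefix height function for the letter pair `(hi, lo)`. -/
def Fd (k : ℕ) : ℤ := (pcount w k hi : ℤ) - pcount w k lo

variable {w hi lo}

lemma Fd_zero : Fd w hi lo 0 = 0 := by simp [Fd, pcount]

lemma Fd_step (k : ℕ) : Fd w hi lo (k + 1) ≤ Fd w hi lo k + 1 := by
  rcases Nat.lt_or_ge k (3 * n) with hk | hk
  · unfold Fd
    rw [pcount_succ_of_lt hk hi, pcount_succ_of_lt hk lo]
    split_ifs <;> push_cast <;> omega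
  · unfold Fd
    rw [pcount_succ_of_ge hk hi, pcount_succ_of_ge hk lo]
    omega

lemma Fd_succ_of_hi (hne : hi ≠ lo) {k : ℕ} (hk : k < 3 * n) (h : w ⟨k, hk⟩ = hi) :
    Fd w hi lo (k + 1) = Fd w hi lo k + 1 := by
  unfold Fd
  rw [pcount_succ_of_lt hk hi, pcount_succ_of_lt hk lo, if_pos h, if_neg (by rw [h]; exact hne)]
  push_cast; ring

lemma Fd_succ_of_lo (hne : hi ≠ lo) {k : ℕ} (hk : k < 3 * n) (h : w ⟨k, hk⟩ = lo) :
    Fd w hi lo (k + 1) = Fd w hi lo k - 1 := by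
  unfold Fd
  rw [pcount_succ_of_lt hk hi, pcount_succ_of_lt hk lo,
    if_neg (by rw [h]; exact fun hh => hne hh.symm), if_pos h]
  push_cast; ring

lemma eq_hi_of_ascent {k : ℕ} (hk : k < 3 * n)
    (h : Fd w hi lo (k + 1) = Fd w hi lo k + 1) : w ⟨k, hk⟩ = hi := by
  by_contra hne
  have : Fd w hi lo (k + 1) ≤ Fd w hi lo k := by
    unfold Fd at *
    rw [pcount_succ_of_lt hk hi, pcount_succ_of_lt hk lo, if_neg hne] at h ⊢
    split_ifs <;> push_cast <;> omega
  omega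

end Matching


section Matching2

variable {w : Fin (3 * n) → Fin 3} {hi lo : Fin 3}

variable (w hi lo) in
/-- Candidate openers for the closer `q`. -/
def matchSet (q : Fin (3 * n)) : Finset (Fin (3 * n)) :=
  Finset.univ.filter (fun p => p.val < q.val ∧ w p = hi ∧ Fd w hi lo p.val = Fd w hi lo q.val - 1)

variable (w hi lo) in
/-- The matching: each closer is matched to the rightmost candidate opener. -/
noncomputable def pamatch (q : Fin (3 * n)) : Fin (3 * n) :=
  if h : (matchSet w hi lo q).Nonempty then (matchSet w hi lo q).max' h else q

lemma Fd_pos_of_lo (hne : hi ≠ lo) (hlat : ∀ k, pcount w k lo ≤ pcount w k hi)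
    {q : Fin (3 * n)} (hq : w q = lo) : 1 ≤ Fd w hi lo q.val := by
  have h1 : Fd w hi lo (q.val + 1) = Fd w hi lo q.val - 1 := Fd_succ_of_lo hne q.isLt hq
  have h2 : (0 : ℤ) ≤ Fd w hi lo (q.val + 1) := by
    unfold Fd; have := hlat (q.val + 1); push_cast; omega
  omega

lemma mem_matchSet_iff {p q : Fin (3 * n)} :
    p ∈ matchSet w hi lo q ↔
      p.val < q.val ∧ w p = hi ∧ Fd w hi lo p.val = Fd w hi lo q.val - 1 := by
  simp [matchSet]

lemma matchSet_nonempty (hne : hi ≠ lo) (hlat : ∀ k, pcount w k lo ≤ pcount w k hi)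
    {q : Fin (3 * n)} (hq : w q = lo) : (matchSet w hi lo q).Nonempty := by
  have h0 : Fd w hi lo 0 < Fd w hi lo q.val := by
    rw [Fd_zero]; have := Fd_pos_of_lo hne hlat hq; omega
  obtain ⟨r, -, hrq, hF, hF1⟩ := lastAscent (Fd w hi lo) Fd_step (Nat.zero_le _) h0
  have hr3 : r < 3 * n := lt_trans hrq q.isLt
  have hwr : w ⟨r, hr3⟩ = hi := eq_hi_of_ascent (lo := lo) hr3 (by omega)
  exact ⟨⟨r, hr3⟩, mem_matchSet_iff.2 ⟨hrq, hwr, hF⟩⟩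

lemma pamatch_mem (hne : hi ≠ lo) (hlat : ∀ k, pcount w k lo ≤ pcount w k hi)
    {q : Fin (3 * n)} (hq : w q = lo) : pamatch w hi lo q ∈ matchSet w hi lo q := by
  rw [pamatch, dif_pos (matchSet_nonempty hne hlat hq)]
  exact Finset.max'_mem _ _

lemma le_pamatch {p q : Fin (3 * n)} (hp : p ∈ matchSet w hi lo q) :
    p ≤ pamatch w hi lo q := by
  rw [pamatch, dif_pos ⟨p, hp⟩]
  exact Finset.le_max' _ _ hp

/-- The key "stays high" property inside an arc. -/
lemma pamatch_star (hne : hi ≠ lo) (hlat : ∀ k, pcount w k lo ≤ pcount w k hi)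
    {q : Fin (3 * n)} (hq : w q = lo) {k : ℕ}
    (h1 : (pamatch w hi lo q).val < k) (h2 : k < q.val) :
    Fd w hi lo q.val ≤ Fd w hi lo k := by
  by_contra hbad
  push_neg at hbad
  obtain ⟨r, hkr, hrq, hF, hF1⟩ := lastAscent (Fd w hi lo) Fd_step (le_of_lt h2) hbad
  have hr3 : r < 3 * n := lt_trans hrq q.isLt
  have hwr : w ⟨r, hr3⟩ = hi := eq_hi_of_ascent (lo := lo) hr3 (by omega)
  have hmem : (⟨r, hr3⟩ : Fin (3 * n)) ∈ matchSet w hi lo q :=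
    mem_matchSet_iff.2 ⟨hrq, hwr, hF⟩
  have := le_pamatch hmem
  simp only [Fin.le_def] at this
  omega

lemma pamatch_inj (hne : hi ≠ lo) (hlat : ∀ k, pcount w k lo ≤ pcount w k hi)
    {q q' : Fin (3 * n)} (hq : w q = lo) (hq' : w q' = lo)
    (hlt : q.val < q'.val) (heq : pamatch w hi lo q = pamatch w hi lo q') : False := by
  have hm := pamatch_mem hne hlat hq
  have hm' := pamatch_mem hne hlat hq'
  rw [mem_matchSet_iff] at hm hm'
  rw [heq] at hm
  have hFqq' : Fd w hi lo q.val = Fd w hi lo q'.val := by omega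
  have hs : Fd w hi lo (q.val + 1) = Fd w hi lo q.val - 1 := Fd_succ_of_lo hne q.isLt hq
  rcases Nat.lt_or_ge (q.val + 1) q'.val with hc | hc
  · have hlow : Fd w hi lo (q.val + 1) < Fd w hi lo q'.val := by omega
    obtain ⟨r, hkr, hrq, hF, hF1⟩ := lastAscent (Fd w hi lo) Fd_step (le_of_lt hc) hlow
    have hr3 : r < 3 * n := lt_trans hrq q'.isLt
    have hwr : w ⟨r, hr3⟩ = hi := eq_hi_of_ascent (lo := lo) hr3 (by omega)
    have hmem : (⟨r, hr3⟩ : Fin (3 * n)) ∈ matchSet w hi lo q' :=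
      mem_matchSet_iff.2 ⟨hrq, hwr, hF⟩
    have hle := le_pamatch hmem
    rw [← heq] at hle
    simp only [Fin.le_def] at hle
    omega
  · have : q.val + 1 = q'.val := by omega
    rw [this] at hs
    omega

lemma pamatch_noncross (hne : hi ≠ lo) (hlat : ∀ k, pcount w k lo ≤ pcount w k hi)
    {q q' : Fin (3 * n)} (hq : w q = lo) (hq' : w q' = lo) :
    ¬ (pamatch w hi lo q < pamatch w hi lo q' ∧ pamatch w hi lo q' < q ∧ q < q') := by
  rintro ⟨h1, h2, h3⟩
  have hs1 : Fd w hi lo q.val ≤ Fd w hi lo (pamatch w hi lo q').val :=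
    pamatch_star hne hlat hq h1 h2
  have hm' := pamatch_mem hne hlat hq'
  rw [mem_matchSet_iff] at hm'
  have hs2 : Fd w hi lo q'.val ≤ Fd w hi lo q.val :=
    pamatch_star hne hlat hq' h2 h3
  omega




variable (w) in
/-- Positions strictly between `p` and `q` carrying letter `ℓ`. -/
def arcSet (ℓ : Fin 3) (p q : Fin (3 * n)) : Finset (Fin (3 * n)) :=
  Finset.univ.filter (fun i => p.val < i.val ∧ i.val < q.val ∧ w i = ℓ)

lemma mem_arcSet_iff {ℓ : Fin 3} {p q i : Fin (3 * n)} :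
    i ∈ arcSet w ℓ p q ↔ p.val < i.val ∧ i.val < q.val ∧ w i = ℓ := by
  simp [arcSet]

lemma Fd_bal_iff (hne : hi ≠ lo) {p q : Fin (3 * n)} (hpq : p < q) (hp : w p = hi) :
    Fd w hi lo p.val = Fd w hi lo q.val - 1 ↔
      (arcSet w hi p q).card = (arcSet w lo p q).card := by
  classical
  have hpq' : p.val ≤ q.val := le_of_lt hpq
  have e1 : (Finset.univ.filter (fun i : Fin (3 * n) => p.val ≤ i.val ∧ i.val < q.val ∧ w i = hi))
      = insert p (arcSet w hi p q) := by
    ext i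
    simp only [Finset.mem_filter, Finset.mem_univ, true_and, Finset.mem_insert, mem_arcSet_iff]
    constructor
    · rintro ⟨h1, h2, h3⟩
      rcases Nat.eq_or_lt_of_le h1 with h | h
      · exact Or.inl (Fin.ext h.symm)
      · exact Or.inr ⟨h, h2, h3⟩
    · rintro (rfl | ⟨h1, h2, h3⟩)
      · exact ⟨le_refl _, hpq, hp⟩
      · exact ⟨le_of_lt h1, h2, h3⟩
  have e2 : (Finset.univ.filter (fun i : Fin (3 * n) => p.val ≤ i.val ∧ i.val < q.val ∧ w i = lo))
      = arcSet w lo p q := by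
    ext i
    simp only [Finset.mem_filter, Finset.mem_univ, true_and, mem_arcSet_iff]
    constructor
    · rintro ⟨h1, h2, h3⟩
      rcases Nat.eq_or_lt_of_le h1 with h | h
      · exfalso; have : i = p := Fin.ext h.symm; subst this; rw [h3] at hp; exact hne hp.symm
      · exact ⟨h, h2, h3⟩
    · rintro ⟨h1, h2, h3⟩
      exact ⟨le_of_lt h1, h2, h3⟩
  have hnotmem : p ∉ arcSet w hi p q := by
    rw [mem_arcSet_iff]; omega
  have c1 := pcount_add_interval (w := w) hpq' hi
  have c2 := pcount_add_interval (w := w) hpq' lo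
  rw [e1, Finset.card_insert_of_notMem hnotmem] at c1
  rw [e2] at c2
  unfold Fd
  omega

/-- Any "geometric" non-crossing matching agrees with the greedy maximal matching. -/
theorem matching_eq_max (hne : hi ≠ lo) (pa' pb' : Fin (3 * n) → Fin (3 * n))
    (hOpenW : ∀ i, w i = lo → w (pa' i) = hi) (hOpenLt : ∀ i, w i = lo → pa' i < i)
    (hCloseGt : ∀ i, w i = hi → i < pb' i)
    (hCloseW : ∀ i, w i = hi → w (pb' i) = lo)
    (hinv1 : ∀ i, w i = lo → pb' (pa' i) = i) (hinv2 : ∀ i, w i = hi → pa' (pb' i) = i)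
    (hnc : ∀ i j, w i = lo → w j = lo → ¬ (pa' i < pa' j ∧ pa' j < i ∧ i < j))
    (q : Fin (3 * n)) (hq : w q = lo) : pa' q = pamatch w hi lo q := by
  classical
  have hPq : pa' q < q := hOpenLt q hq
  have hwP : w (pa' q) = hi := hOpenW q hq
  -- Claim A : openers strictly inside the arc close strictly inside it
  have claimA : ∀ z o : Fin (3 * n), pa' q ≤ z → z < o → o < q → w o = hi →
      z < pb' o ∧ pb' o < q ∧ w (pb' o) = lo := by
    intro z o hz hzo hoq hwo
    have h1 : z < pb' o := lt_trans hzo (hCloseGt o hwo)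
    have hne2 : pb' o ≠ q := by
      intro h
      have : pa' q = o := by rw [← h, hinv2 o hwo]
      rw [this] at hz
      exact absurd hzo (not_lt_of_ge hz)
    have h2 : pb' o < q := by
      rcases lt_trichotomy (pb' o) q with h | h | h
      · exact h
      · exact absurd h hne2
      · exfalso
        refine hnc q (pb' o) hq (hCloseW o hwo) ⟨?_, ?_, h⟩
        · rw [hinv2 o hwo]; exact lt_of_le_of_lt hz hzo
        · rw [hinv2 o hwo]; exact hoq
    exact ⟨h1, h2, hCloseW o hwo⟩
  -- Claim B : closers strictly inside the arc open strictly inside it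
  have claimB : ∀ r : Fin (3 * n), pa' q < r → r < q → w r = lo →
      pa' q < pa' r ∧ pa' r < r := by
    intro r h1 h2 hwr
    refine ⟨?_, hOpenLt r hwr⟩
    rcases lt_trichotomy (pa' r) (pa' q) with h | h | h
    · exfalso; exact hnc r q hwr hq ⟨h, h1, h2⟩
    · exfalso
      have : r = q := by
        have := hinv1 r hwr
        rw [h, hinv1 q hq] at this
        exact this.symm
      subst this; exact absurd h2 (lt_irrefl _)
    · exact h
  -- membership of `pa' q` in the match set, via the balance condition
  have hcard : (arcSet w hi (pa' q) q).card = (arcSet w lo (pa' q) q).card := by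
    apply le_antisymm
    · apply Finset.card_le_card_of_injOn pb'
      · intro o ho
        rw [Finset.mem_coe, mem_arcSet_iff] at ho ⊢
        obtain ⟨h1, h2, h3⟩ := ho
        obtain ⟨g1, g2, g3⟩ := claimA (pa' q) o (le_refl _) (h1)
          (h2) h3
        exact ⟨g1, g2, g3⟩
      · intro o ho o' ho' h
        rw [Finset.mem_coe, mem_arcSet_iff] at ho ho'
        have := hinv2 o ho.2.2
        rw [h, hinv2 o' ho'.2.2] at this
        exact this.symm
    · apply Finset.card_le_card_of_injOn pa'
      · intro r hr
        rw [Finset.mem_coe, mem_arcSet_iff] at hr ⊢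
        obtain ⟨h1, h2, h3⟩ := hr
        obtain ⟨g1, g2⟩ := claimB r (h1)
          (h2) h3
        exact ⟨g1, lt_trans g2 (h2), hOpenW r h3⟩
      · intro r hr r' hr' h
        rw [Finset.mem_coe, mem_arcSet_iff] at hr hr'
        have := hinv1 r hr.2.2
        rw [h, hinv1 r' hr'.2.2] at this
        exact this.symm
  have hmemb : pa' q ∈ matchSet w hi lo q :=
    mem_matchSet_iff.2 ⟨hPq, hwP, (Fd_bal_iff hne hPq hwP).2 hcard⟩
  have hSne : (matchSet w hi lo q).Nonempty := ⟨pa' q, hmemb⟩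
  have hp''mem : pamatch w hi lo q ∈ matchSet w hi lo q := by
    rw [pamatch, dif_pos hSne]; exact Finset.max'_mem _ _
  refine le_antisymm (le_pamatch hmemb) ?_
  by_contra hlt'
  push_neg at hlt'
  set p'' := pamatch w hi lo q with hp''
  rw [mem_matchSet_iff] at hp''mem
  obtain ⟨hp1, hp2, hp3⟩ := hp''mem
  have hp1' : p'' < q := hp1
  have hcard'' : (arcSet w hi p'' q).card = (arcSet w lo p'' q).card :=
    (Fd_bal_iff hne hp1' hp2).1 hp3
  have himsub : (arcSet w hi p'' q).image pb' ⊆ arcSet w lo p'' q := by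
    intro y hy
    rw [Finset.mem_image] at hy
    obtain ⟨o, ho, rfl⟩ := hy
    rw [mem_arcSet_iff] at ho ⊢
    obtain ⟨h1, h2, h3⟩ := ho
    obtain ⟨g1, g2, g3⟩ := claimA p'' o (le_of_lt hlt') (h1)
      (h2) h3
    exact ⟨g1, g2, g3⟩
  have hinjOn : Set.InjOn pb' (arcSet w hi p'' q) := by
    intro o ho o' ho' h
    rw [Finset.mem_coe, mem_arcSet_iff] at ho ho'
    have := hinv2 o ho.2.2
    rw [h, hinv2 o' ho'.2.2] at this
    exact this.symm
  have himeq : (arcSet w hi p'' q).image pb' = arcSet w lo p'' q := by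
    apply Finset.eq_of_subset_of_card_le himsub
    rw [Finset.card_image_of_injOn hinjOn, hcard'']
  have hpb''mem : pb' p'' ∈ arcSet w lo p'' q := by
    obtain ⟨g1, g2, g3⟩ := claimA (pa' q) p'' (le_refl _) hlt' hp1' hp2
    rw [mem_arcSet_iff]
    exact ⟨hCloseGt p'' hp2, g2, g3⟩
  rw [← himeq, Finset.mem_image] at hpb''mem
  obtain ⟨o, ho, hoeq⟩ := hpb''mem
  rw [mem_arcSet_iff] at ho
  have : o = p'' := by
    have := hinv2 o ho.2.2
    rw [hoeq, hinv2 p'' hp2] at this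
    exact this.symm
  subst this
  exact absurd ho.1 (lt_irrefl _)

end Matching2


section Build

variable {w : Fin (3 * n) → Fin 3} {hi lo : Fin 3}

lemma card_letter (hcnt : ∀ ℓ : Fin 3, (Finset.univ.filter (fun i => w i = ℓ)).card = n)
    (ℓ : Fin 3) : Fintype.card {i : Fin (3 * n) // w i = ℓ} = n := by
  classical
  rw [Fintype.card_subtype]
  exact hcnt ℓ

/-- The greedy matching as an equivalence between closers and openers. -/
noncomputable def matchEquiv (hne : hi ≠ lo) (hlat : ∀ k, pcount w k lo ≤ pcount w k hi)
    (hcnt : ∀ ℓ : Fin 3, (Finset.univ.filter (fun i => w i = ℓ)).card = n) :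
    {i : Fin (3 * n) // w i = lo} ≃ {i : Fin (3 * n) // w i = hi} := by
  classical
  refine Equiv.ofBijective
    (fun q => ⟨pamatch w hi lo q.1, (mem_matchSet_iff.1 (pamatch_mem hne hlat q.2)).2.1⟩) ?_
  rw [Fintype.bijective_iff_injective_and_card, card_letter hcnt, card_letter hcnt]
  refine ⟨?_, rfl⟩
  intro q q' h
  simp only [Subtype.mk.injEq] at h
  rcases lt_trichotomy q.1.val q'.1.val with hc | hc | hc
  · exact absurd (pamatch_inj hne hlat q.2 q'.2 hc h) not_false
  · exact Subtype.ext (Fin.ext hc)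
  · exact absurd (pamatch_inj hne hlat q'.2 q.2 hc h.symm) not_false

lemma matchEquiv_apply_val (hne : hi ≠ lo) (hlat : ∀ k, pcount w k lo ≤ pcount w k hi)
    (hcnt : ∀ ℓ : Fin 3, (Finset.univ.filter (fun i => w i = ℓ)).card = n)
    (q : {i : Fin (3 * n) // w i = lo}) :
    (matchEquiv hne hlat hcnt q).val = pamatch w hi lo q.val := rfl

lemma matchEquiv_symm_val (hne : hi ≠ lo) (hlat : ∀ k, pcount w k lo ≤ pcount w k hi)
    (hcnt : ∀ ℓ : Fin 3, (Finset.univ.filter (fun i => w i = ℓ)).card = n)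
    (p : {i : Fin (3 * n) // w i = hi}) :
    pamatch w hi lo ((matchEquiv hne hlat hcnt).symm p).val = p.val := by
  have := (matchEquiv hne hlat hcnt).apply_symm_apply p
  exact congrArg Subtype.val this

end Build

section BuildM

variable {w : Fin (3 * n) → Fin 3}

lemma hne21 : (2 : Fin 3) ≠ 1 := by decide
lemma hne10 : (1 : Fin 3) ≠ 0 := by decide

lemma w_eq_zero {i : Fin (3 * n)} (h2 : ¬ w i = 2) (h1 : ¬ w i = 1) : w i = 0 := by
  rcases fin3_cases (w i) with h | h | h
  · exact h
  · exact absurd h h1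
  · exact absurd h h2

variable (w) in
/-- The matching between middle points and left points. -/
noncomputable def E1 (hlat : IsLatticeWord w)
    (hcnt : ∀ ℓ : Fin 3, (Finset.univ.filter (fun i => w i = ℓ)).card = n) :
    {i : Fin (3 * n) // w i = 1} ≃ {i : Fin (3 * n) // w i = 2} :=
  matchEquiv hne21 (fun k => (hlat k).1) hcnt

variable (w) in
/-- The matching between right points and middle points. -/
noncomputable def E0 (hlat : IsLatticeWord w)
    (hcnt : ∀ ℓ : Fin 3, (Finset.univ.filter (fun i => w i = ℓ)).card = n) :
    {i : Fin (3 * n) // w i = 0} ≃ {i : Fin (3 * n) // w i = 1} :=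
  matchEquiv hne10 (fun k => (hlat k).2) hcnt

variable (hlat : IsLatticeWord w)
    (hcnt : ∀ ℓ : Fin 3, (Finset.univ.filter (fun i => w i = ℓ)).card = n)

lemma E1_val (q : {i : Fin (3 * n) // w i = 1}) :
    (E1 w hlat hcnt q).val = pamatch w 2 1 q.val := rfl

lemma E0_val (q : {i : Fin (3 * n) // w i = 0}) :
    (E0 w hlat hcnt q).val = pamatch w 1 0 q.val := rfl

lemma E1_symm_val (p : {i : Fin (3 * n) // w i = 2}) :
    pamatch w 2 1 ((E1 w hlat hcnt).symm p).val = p.val :=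
  matchEquiv_symm_val _ _ _ p

lemma E0_symm_val (p : {i : Fin (3 * n) // w i = 1}) :
    pamatch w 1 0 ((E0 w hlat hcnt).symm p).val = p.val :=
  matchEquiv_symm_val _ _ _ p

lemma E1_lt (q : {i : Fin (3 * n) // w i = 1}) : (E1 w hlat hcnt q).val < q.val :=
  (mem_matchSet_iff.1 (pamatch_mem hne21 (fun k => (hlat k).1) q.2)).1

lemma E0_symm_gt (p : {i : Fin (3 * n) // w i = 1}) :
    p.val < ((E0 w hlat hcnt).symm p).val := by
  have hm := pamatch_mem hne10 (fun k => (hlat k).2) ((E0 w hlat hcnt).symm p).2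
  have h1 := (mem_matchSet_iff.1 hm).1
  rw [E0_symm_val hlat hcnt] at h1
  exact h1

variable (w) in
/-- The middle point of the triple containing `i`. -/
noncomputable def midOf (i : Fin (3 * n)) : {j : Fin (3 * n) // w j = 1} :=
  if h : w i = 2 then (E1 w hlat hcnt).symm ⟨i, h⟩
  else if h' : w i = 1 then ⟨i, h'⟩
  else E0 w hlat hcnt ⟨i, w_eq_zero h h'⟩

lemma midOf_of_w2 {i : Fin (3 * n)} (h : w i = 2) :
    midOf w hlat hcnt i = (E1 w hlat hcnt).symm ⟨i, h⟩ := dif_pos h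

lemma midOf_of_w1 {i : Fin (3 * n)} (h : w i = 1) :
    midOf w hlat hcnt i = ⟨i, h⟩ := by
  rw [midOf, dif_neg (by rw [h]; decide), dif_pos h]

lemma midOf_of_w0 {i : Fin (3 * n)} (h : w i = 0) :
    midOf w hlat hcnt i = E0 w hlat hcnt ⟨i, h⟩ := by
  rw [midOf, dif_neg (by rw [h]; decide), dif_neg (by rw [h]; decide)]

lemma midOf_a (x : {j : Fin (3 * n) // w j = 1}) :
    midOf w hlat hcnt (E1 w hlat hcnt x).val = x := by
  rw [midOf_of_w2 hlat hcnt (E1 w hlat hcnt x).2]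
  have : (⟨(E1 w hlat hcnt x).val, (E1 w hlat hcnt x).2⟩ :
      {i : Fin (3 * n) // w i = 2}) = E1 w hlat hcnt x := Subtype.ext rfl
  rw [this, Equiv.symm_apply_apply]

lemma midOf_b (x : {j : Fin (3 * n) // w j = 1}) :
    midOf w hlat hcnt x.val = x := by
  rw [midOf_of_w1 hlat hcnt x.2]

lemma midOf_c (x : {j : Fin (3 * n) // w j = 1}) :
    midOf w hlat hcnt ((E0 w hlat hcnt).symm x).val = x := by
  rw [midOf_of_w0 hlat hcnt ((E0 w hlat hcnt).symm x).2]
  have : (⟨((E0 w hlat hcnt).symm x).val, ((E0 w hlat hcnt).symm x).2⟩ :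
      {i : Fin (3 * n) // w i = 0}) = (E0 w hlat hcnt).symm x := Subtype.ext rfl
  rw [this, Equiv.apply_symm_apply]

variable (w) in
/-- The M-diagram constructed from a lattice word. -/
noncomputable def buildM : MDiagram n where
  a := fun i => (E1 w hlat hcnt (midOf w hlat hcnt i)).val
  b := fun i => (midOf w hlat hcnt i).val
  c := fun i => ((E0 w hlat hcnt).symm (midOf w hlat hcnt i)).val
  hab := fun i => E1_lt hlat hcnt (midOf w hlat hcnt i)
  hbc := fun i => E0_symm_gt hlat hcnt (midOf w hlat hcnt i)
  mem_triple := by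
    intro i
    rcases fin3_cases (w i) with h | h | h
    · right; right
      rw [midOf_of_w0 hlat hcnt h, Equiv.symm_apply_apply]
    · right; left
      rw [midOf_of_w1 hlat hcnt h]
    · left
      rw [midOf_of_w2 hlat hcnt h, Equiv.apply_symm_apply]
  coherent := by
    intro i j hj
    have hmid : midOf w hlat hcnt j = midOf w hlat hcnt i := by
      rcases hj with rfl | rfl | rfl
      · exact midOf_a hlat hcnt _
      · exact midOf_b hlat hcnt _
      · exact midOf_c hlat hcnt _
    refine ⟨?_, ?_, ?_⟩ <;> rw [hmid]
  noncrossL := by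
    intro i j
    rw [E1_val, E1_val]
    exact pamatch_noncross hne21 (fun k => (hlat k).1)
      (midOf w hlat hcnt i).2 (midOf w hlat hcnt j).2
  noncrossR := by
    intro i j
    rw [show ((midOf w hlat hcnt i) : Fin (3 * n)) =
        pamatch w 1 0 ((E0 w hlat hcnt).symm (midOf w hlat hcnt i)).val from
        (E0_symm_val hlat hcnt _).symm,
      show ((midOf w hlat hcnt j) : Fin (3 * n)) =
        pamatch w 1 0 ((E0 w hlat hcnt).symm (midOf w hlat hcnt j)).val from
        (E0_symm_val hlat hcnt _).symm]
    exact pamatch_noncross hne10 (fun k => (hlat k).2)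
      ((E0 w hlat hcnt).symm (midOf w hlat hcnt i)).2
      ((E0 w hlat hcnt).symm (midOf w hlat hcnt j)).2

lemma mword_buildM : mword (buildM w hlat hcnt) = w := by
  funext i
  rcases fin3_cases (w i) with h | h | h
  · have hc : i = (buildM w hlat hcnt).c i := by
      show i = ((E0 w hlat hcnt).symm (midOf w hlat hcnt i)).val
      rw [midOf_of_w0 hlat hcnt h, Equiv.symm_apply_apply]
    have hab := (buildM w hlat hcnt).hab i
    have hbc := (buildM w hlat hcnt).hbc i
    rw [mword, if_neg, if_neg]
    · exact h.symm
    all_goals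
      intro hh
      have h1 := congrArg Fin.val hh
      have h2 := congrArg Fin.val hc
      have h3 : ((buildM w hlat hcnt).a i).val < ((buildM w hlat hcnt).b i).val := hab
      have h4 : ((buildM w hlat hcnt).b i).val < ((buildM w hlat hcnt).c i).val := hbc
      omega
  · have hb : i = (buildM w hlat hcnt).b i := by
      show i = (midOf w hlat hcnt i).val
      rw [midOf_of_w1 hlat hcnt h]
    have hab := (buildM w hlat hcnt).hab i
    rw [mword, if_neg, if_pos hb.symm.symm]
    · exact h.symm
    · intro hh
      have h1 := congrArg Fin.val hh
      have h2 := congrArg Fin.val hb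
      have h3 : ((buildM w hlat hcnt).a i).val < ((buildM w hlat hcnt).b i).val := hab
      omega
  · have ha : i = (buildM w hlat hcnt).a i := by
      show i = (E1 w hlat hcnt (midOf w hlat hcnt i)).val
      rw [midOf_of_w2 hlat hcnt h, Equiv.apply_symm_apply]
    rw [mword, if_pos ha.symm.symm]
    exact h.symm

end BuildM


section MFacts

variable {m : MDiagram n}

lemma a_idem (i : Fin (3 * n)) : m.a (m.a i) = m.a i := (m.coherent i (m.a i) (Or.inl rfl)).1
lemma b_of_a (i : Fin (3 * n)) : m.b (m.a i) = m.b i := (m.coherent i (m.a i) (Or.inl rfl)).2.1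
lemma c_of_a (i : Fin (3 * n)) : m.c (m.a i) = m.c i := (m.coherent i (m.a i) (Or.inl rfl)).2.2
lemma a_of_b (i : Fin (3 * n)) : m.a (m.b i) = m.a i :=
  (m.coherent i (m.b i) (Or.inr (Or.inl rfl))).1
lemma b_idem (i : Fin (3 * n)) : m.b (m.b i) = m.b i :=
  (m.coherent i (m.b i) (Or.inr (Or.inl rfl))).2.1
lemma c_of_b (i : Fin (3 * n)) : m.c (m.b i) = m.c i :=
  (m.coherent i (m.b i) (Or.inr (Or.inl rfl))).2.2
lemma a_of_c (i : Fin (3 * n)) : m.a (m.c i) = m.a i :=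
  (m.coherent i (m.c i) (Or.inr (Or.inr rfl))).1
lemma b_of_c (i : Fin (3 * n)) : m.b (m.c i) = m.b i :=
  (m.coherent i (m.c i) (Or.inr (Or.inr rfl))).2.1
lemma c_idem (i : Fin (3 * n)) : m.c (m.c i) = m.c i :=
  (m.coherent i (m.c i) (Or.inr (Or.inr rfl))).2.2

lemma mword_eq_two_iff {i : Fin (3 * n)} : mword m i = 2 ↔ i = m.a i := by
  unfold mword
  split_ifs with h1 h2
  · exact ⟨fun _ => h1, fun _ => rfl⟩
  · exact iff_of_false (by decide) h1
  · exact iff_of_false (by decide) h1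

lemma mword_eq_one_iff {i : Fin (3 * n)} : mword m i = 1 ↔ i = m.b i := by
  unfold mword
  split_ifs with h1 h2
  · have hab := m.hab i
    rw [← h1] at hab
    constructor
    · intro h; exact absurd h (by decide)
    · intro h; rw [← h] at hab; exact absurd hab (lt_irrefl _)
  · exact ⟨fun _ => h2, fun _ => rfl⟩
  · exact iff_of_false (by decide) h2

lemma mword_eq_zero_iff {i : Fin (3 * n)} : mword m i = 0 ↔ i = m.c i := by
  unfold mword
  split_ifs with h1 h2
  · have hab := m.hab i
    have hbc := m.hbc i
    rw [← h1] at hab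
    constructor
    · intro h; exact absurd h (by decide)
    · intro h; rw [← h] at hbc
      exact absurd (lt_trans hab hbc) (lt_irrefl _)
  · have hbc := m.hbc i
    rw [← h2] at hbc
    constructor
    · intro h; exact absurd h (by decide)
    · intro h; rw [← h] at hbc; exact absurd hbc (lt_irrefl _)
  · constructor
    · intro _
      rcases m.mem_triple i with h | h | h
      · exact absurd h h1
      · exact absurd h h2
      · exact h
    · intro _; rfl

lemma mword_a (i : Fin (3 * n)) : mword m (m.a i) = 2 := by
  rw [mword_eq_two_iff]; exact (a_idem i).symm

lemma mword_b (i : Fin (3 * n)) : mword m (m.b i) = 1 := by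
  rw [mword_eq_one_iff]; exact (b_idem i).symm

lemma mword_c (i : Fin (3 * n)) : mword m (m.c i) = 0 := by
  rw [mword_eq_zero_iff]; exact (c_idem i).symm

variable (m) in
lemma mcount : ∀ ℓ : Fin 3, (Finset.univ.filter (fun i => mword m i = ℓ)).card = n := by
  classical
  have hAB : (Finset.univ.filter (fun i => mword m i = 2)).card =
      (Finset.univ.filter (fun i => mword m i = 1)).card := by
    apply le_antisymm
    · apply Finset.card_le_card_of_injOn m.b
      · intro i hi
        simp only [Finset.mem_coe, Finset.mem_filter, Finset.mem_univ, true_and] at hi ⊢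
        exact mword_b i
      · intro i hi j hj h
        simp only [Finset.coe_filter, Set.mem_setOf_eq, Finset.mem_univ, true_and] at hi hj
        rw [mword_eq_two_iff] at hi hj
        rw [hi, hj, ← a_of_b i, h, a_of_b j]
    · apply Finset.card_le_card_of_injOn m.a
      · intro i hi
        simp only [Finset.mem_coe, Finset.mem_filter, Finset.mem_univ, true_and] at hi ⊢
        exact mword_a i
      · intro i hi j hj h
        simp only [Finset.coe_filter, Set.mem_setOf_eq, Finset.mem_univ, true_and] at hi hj
        rw [mword_eq_one_iff] at hi hj
        rw [hi, hj, ← b_of_a i, h, b_of_a j]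
  have hBC : (Finset.univ.filter (fun i => mword m i = 1)).card =
      (Finset.univ.filter (fun i => mword m i = 0)).card := by
    apply le_antisymm
    · apply Finset.card_le_card_of_injOn m.c
      · intro i hi
        simp only [Finset.mem_coe, Finset.mem_filter, Finset.mem_univ, true_and] at hi ⊢
        exact mword_c i
      · intro i hi j hj h
        simp only [Finset.coe_filter, Set.mem_setOf_eq, Finset.mem_univ, true_and] at hi hj
        rw [mword_eq_one_iff] at hi hj
        rw [hi, hj, ← b_of_c i, h, b_of_c j]
    · apply Finset.card_le_card_of_injOn m.b
      · intro i hi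
        simp only [Finset.mem_coe, Finset.mem_filter, Finset.mem_univ, true_and] at hi ⊢
        exact mword_b i
      · intro i hi j hj h
        simp only [Finset.coe_filter, Set.mem_setOf_eq, Finset.mem_univ, true_and] at hi hj
        rw [mword_eq_zero_iff] at hi hj
        rw [hi, hj, ← c_of_b i, h, c_of_b j]
  have hsum : ∑ ℓ : Fin 3, (Finset.univ.filter (fun i => mword m i = ℓ)).card = 3 * n := by
    rw [← Finset.card_eq_sum_card_fiberwise (fun i _ => Finset.mem_univ (mword m i))]
    simp
  rw [Fin.sum_univ_three] at hsum
  intro ℓ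
  rcases fin3_cases ℓ with h | h | h <;> subst h <;> omega

variable (m) in
lemma mlattice : IsLatticeWord (mword m) := by
  classical
  intro k
  constructor
  · apply Finset.card_le_card_of_injOn m.a
    · intro i hi
      simp only [Finset.mem_coe, Finset.mem_filter, Finset.mem_univ, true_and] at hi ⊢
      obtain ⟨h1, h2⟩ := hi
      refine ⟨?_, mword_a i⟩
      have hab := m.hab i
      rw [mword_eq_one_iff] at h2
      rw [← h2] at hab
      have : (m.a i).val < i.val := hab
      omega
    · intro i hi j hj h
      simp only [Finset.coe_filter, Set.mem_setOf_eq, Finset.mem_univ, true_and] at hi hj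
      rw [mword_eq_one_iff] at hi hj
      rw [hi.2, hj.2, ← b_of_a i, h, b_of_a j]
  · apply Finset.card_le_card_of_injOn m.b
    · intro i hi
      simp only [Finset.mem_coe, Finset.mem_filter, Finset.mem_univ, true_and] at hi ⊢
      obtain ⟨h1, h2⟩ := hi
      refine ⟨?_, mword_b i⟩
      have hbc := m.hbc i
      rw [mword_eq_zero_iff] at h2
      rw [← h2] at hbc
      have : (m.b i).val < i.val := hbc
      omega
    · intro i hi j hj h
      simp only [Finset.coe_filter, Set.mem_setOf_eq, Finset.mem_univ, true_and] at hi hj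
      rw [mword_eq_zero_iff] at hi hj
      rw [hi.2, hj.2, ← c_of_b i, h, c_of_b j]

end MFacts


section Unique

lemma MDiagram.ext' {m m' : MDiagram n} (ha : m.a = m'.a) (hb : m.b = m'.b)
    (hc : m.c = m'.c) : m = m' := by
  cases m
  cases m'
  simp only at ha hb hc
  subst ha; subst hb; subst hc
  rfl

variable {m : MDiagram n}

/-- In any M-diagram, the left endpoint of a middle point is given by the greedy matching. -/
lemma a_eq_pamatch {q : Fin (3 * n)} (hq : mword m q = 1) :
    m.a q = pamatch (mword m) 2 1 q := by
  apply matching_eq_max hne21 m.a m.b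
  · intro i _; exact mword_a i
  · intro i hi
    have := m.hab i
    rw [mword_eq_one_iff] at hi
    rw [← hi] at this
    exact this
  · intro i hi
    have := m.hab i
    rw [mword_eq_two_iff] at hi
    rw [← hi] at this
    exact this
  · intro i _; exact mword_b i
  · intro i hi
    rw [mword_eq_one_iff] at hi
    rw [b_of_a i, ← hi]
  · intro i hi
    rw [mword_eq_two_iff] at hi
    rw [a_of_b i, ← hi]
  · intro i j hi hj
    have := m.noncrossL i j
    rw [mword_eq_one_iff] at hi hj
    rw [← hi, ← hj] at this
    exact this
  · exact hq

/-- In any M-diagram, the middle point of a right point is given by the greedy matching. -/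
lemma b_eq_pamatch {q : Fin (3 * n)} (hq : mword m q = 0) :
    m.b q = pamatch (mword m) 1 0 q := by
  apply matching_eq_max hne10 m.b m.c
  · intro i _; exact mword_b i
  · intro i hi
    have := m.hbc i
    rw [mword_eq_zero_iff] at hi
    rw [← hi] at this
    exact this
  · intro i hi
    have := m.hbc i
    rw [mword_eq_one_iff] at hi
    rw [← hi] at this
    exact this
  · intro i _; exact mword_c i
  · intro i hi
    rw [mword_eq_zero_iff] at hi
    rw [c_of_b i, ← hi]
  · intro i hi
    rw [mword_eq_one_iff] at hi
    rw [b_of_c i, ← hi]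
  · intro i j hi hj
    have := m.noncrossR i j
    rw [mword_eq_zero_iff] at hi hj
    rw [← hi, ← hj] at this
    exact this
  · exact hq

variable (m) in
lemma m_eq_buildM : m = buildM (mword m) (mlattice m) (mcount m) := by
  classical
  set w := mword m with hw
  set hlat := mlattice m
  set hcnt := mcount m
  have hb : m.b = (buildM w hlat hcnt).b := by
    funext i
    rcases fin3_cases (w i) with h | h | h
    · -- w i = 0
      show m.b i = (midOf w hlat hcnt i).val
      rw [midOf_of_w0 hlat hcnt h, E0_val hlat hcnt]
      exact b_eq_pamatch h
    · -- w i = 1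
      show m.b i = (midOf w hlat hcnt i).val
      rw [midOf_of_w1 hlat hcnt h]
      rw [mword_eq_one_iff] at h
      exact h.symm
    · -- w i = 2
      show m.b i = (midOf w hlat hcnt i).val
      rw [midOf_of_w2 hlat hcnt h]
      have h2 : mword m i = 2 := h
      have hq : w (m.b i) = 1 := mword_b i
      have h1 : pamatch w 2 1 (m.b i) = i := by
        rw [← a_eq_pamatch hq, a_of_b i]
        rw [mword_eq_two_iff] at h2
        exact h2.symm
      have h1' : pamatch w 2 1 ((E1 w hlat hcnt).symm ⟨i, h⟩).val = i :=
        E1_symm_val hlat hcnt ⟨i, h⟩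
      rcases lt_trichotomy (m.b i).val (((E1 w hlat hcnt).symm ⟨i, h⟩)).val.val with hc | hc | hc
      · exact absurd (pamatch_inj hne21 (fun k => (hlat k).1) hq
          ((E1 w hlat hcnt).symm ⟨i, h⟩).2 hc (by rw [h1, h1'])) not_false
      · exact Fin.ext hc
      · exact absurd (pamatch_inj hne21 (fun k => (hlat k).1)
          ((E1 w hlat hcnt).symm ⟨i, h⟩).2 hq hc (by rw [h1, h1'])) not_false
  have ha : m.a = (buildM w hlat hcnt).a := by
    funext i
    have hq : w (m.b i) = 1 := mword_b i
    have e1 : m.a i = pamatch w 2 1 (m.b i) := by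
      rw [← a_eq_pamatch hq, a_of_b i]
    have e2 : (buildM w hlat hcnt).a i = pamatch w 2 1 ((buildM w hlat hcnt).b i) := by
      show (E1 w hlat hcnt (midOf w hlat hcnt i)).val = _
      rw [E1_val hlat hcnt]
      rfl
    rw [e1, e2, ← hb]
  have hc : m.c = (buildM w hlat hcnt).c := by
    funext i
    have hq : w (m.c i) = 0 := mword_c i
    have e1 : pamatch w 1 0 (m.c i) = m.b i := by
      rw [← b_eq_pamatch hq, b_of_c i]
    have hq' : w ((buildM w hlat hcnt).c i) = 0 :=
      ((E0 w hlat hcnt).symm (midOf w hlat hcnt i)).2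
    have e2 : pamatch w 1 0 ((buildM w hlat hcnt).c i) = m.b i := by
      show pamatch w 1 0 ((E0 w hlat hcnt).symm (midOf w hlat hcnt i)).val = m.b i
      rw [E0_symm_val hlat hcnt]
      rw [hb]
      rfl
    rcases lt_trichotomy (m.c i).val ((buildM w hlat hcnt).c i).val with hcc | hcc | hcc
    · exact absurd (pamatch_inj hne10 (fun k => (hlat k).2) hq hq' hcc
        (by rw [e1, e2])) not_false
    · exact Fin.ext hcc
    · exact absurd (pamatch_inj hne10 (fun k => (hlat k).2) hq' hq hcc
        (by rw [e1, e2])) not_false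
  exact MDiagram.ext' ha hb hc

end Unique


section SYT

/-- The letter carried by each row of the tableau. -/
def rowLetter : Fin 3 → Fin 3 := fun r => if r = 0 then 2 else if r = 1 then 1 else 0

lemma rowLetter_invol : ∀ r : Fin 3, rowLetter (rowLetter r) = r := by decide

lemma rowLetter_inj : Function.Injective rowLetter := by decide

variable {w : Fin (3 * n) → Fin 3}

/-- The `j`-th smallest position with letter `hi` is smaller than the `j`-th smallest
position with letter `lo`, provided prefixes of `w` contain at least as many `hi` as `lo`. -/
lemma emb_lt_emb {hi lo : Fin 3} (hne : hi ≠ lo)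
    (hlat' : ∀ k, pcount w k lo ≤ pcount w k hi)
    (hchi : (Finset.univ.filter (fun i => w i = hi)).card = n)
    (hclo : (Finset.univ.filter (fun i => w i = lo)).card = n) (j : Fin n) :
    (Finset.univ.filter (fun i => w i = hi)).orderEmbOfFin hchi j <
      (Finset.univ.filter (fun i => w i = lo)).orderEmbOfFin hclo j := by
  classical
  set sHi := Finset.univ.filter (fun i => w i = hi) with hsHi
  set sLo := Finset.univ.filter (fun i => w i = lo) with hsLo
  set q := sLo.orderEmbOfFin hclo j with hqdef
  have hq : w q = lo := by
    have := Finset.orderEmbOfFin_mem sLo hclo j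
    exact (Finset.mem_filter.1 this).2
  have h1 : j.val + 1 ≤ pcount w (q.val + 1) lo := by
    have : (Finset.Iic j).card ≤
        (Finset.univ.filter (fun i : Fin (3 * n) => i.val < q.val + 1 ∧ w i = lo)).card := by
      apply Finset.card_le_card_of_injOn (fun k => sLo.orderEmbOfFin hclo k)
      · intro k hk
        rw [Finset.mem_coe, Finset.mem_Iic] at hk
        simp only [Finset.mem_coe, Finset.mem_filter]
        refine ⟨Finset.mem_univ _, ?_, ?_⟩
        · have : sLo.orderEmbOfFin hclo k ≤ q := (sLo.orderEmbOfFin hclo).monotone hk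
          omega
        · have := Finset.orderEmbOfFin_mem sLo hclo k
          exact (Finset.mem_filter.1 this).2
      · intro x _ y _ h
        exact (sLo.orderEmbOfFin hclo).injective h
    rw [Fin.card_Iic] at this
    exact this
  have h2 : j.val + 1 ≤ pcount w (q.val + 1) hi := le_trans h1 (hlat' _)
  have hT : pcount w (q.val + 1) hi =
      (Finset.univ.filter (fun i : Fin (3 * n) => i.val < q.val ∧ w i = hi)).card := by
    unfold pcount
    congr 1
    apply Finset.filter_congr
    intro i _
    constructor
    · rintro ⟨ha, hb⟩
      rcases Nat.lt_or_ge i.val q.val with h | h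
      · exact ⟨h, hb⟩
      · exfalso
        have : i = q := Fin.ext (by omega)
        subst this
        rw [hb] at hq
        exact hne hq
    · rintro ⟨ha, hb⟩
      exact ⟨by omega, hb⟩
  set K := Finset.univ.filter (fun k : Fin n => (sHi.orderEmbOfFin hchi k).val < q.val) with hK
  have hTK : (Finset.univ.filter (fun i : Fin (3 * n) => i.val < q.val ∧ w i = hi)).card ≤
      K.card := by
    have hsub : (Finset.univ.filter (fun i : Fin (3 * n) => i.val < q.val ∧ w i = hi)) ⊆
        K.image (fun k => sHi.orderEmbOfFin hchi k) := by
      intro i hi'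
      rw [Finset.mem_filter] at hi'
      obtain ⟨-, hlt, hwi⟩ := hi'
      have hmem : i ∈ sHi := Finset.mem_filter.2 ⟨Finset.mem_univ _, hwi⟩
      have : i ∈ Set.range (sHi.orderEmbOfFin hchi) := by
        rw [Finset.range_orderEmbOfFin]
        exact_mod_cast hmem
      obtain ⟨k, hk⟩ := this
      rw [Finset.mem_image]
      exact ⟨k, by rw [hK, Finset.mem_filter]; exact ⟨Finset.mem_univ _, by rw [hk]; exact hlt⟩,
        hk⟩
    calc (Finset.univ.filter (fun i : Fin (3 * n) => i.val < q.val ∧ w i = hi)).card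
        ≤ (K.image (fun k => sHi.orderEmbOfFin hchi k)).card := Finset.card_le_card hsub
      _ ≤ K.card := Finset.card_image_le
  by_contra hcon
  push_neg at hcon
  have hKsub : K ⊆ Finset.Iio j := by
    intro k hk
    rw [Finset.mem_filter] at hk
    rw [Finset.mem_Iio]
    have : sHi.orderEmbOfFin hchi k < sHi.orderEmbOfFin hchi j :=
      lt_of_lt_of_le (by exact hk.2) hcon
    exact (sHi.orderEmbOfFin hchi).strictMono.lt_iff_lt.1 this
  have := Finset.card_le_card hKsub
  rw [Fin.card_Iio] at this
  omega

variable (w) in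
/-- The standard Young tableau built from a lattice word: row `r` lists the
positions carrying the letter `rowLetter r`, in increasing order. -/
def sytOfWord (hlat : IsLatticeWord w)
    (hcnt : ∀ ℓ : Fin 3, (Finset.univ.filter (fun i => w i = ℓ)).card = n) : SYT3 n where
  entry := fun r j =>
    (Finset.univ.filter (fun i => w i = rowLetter r)).orderEmbOfFin (hcnt _) j
  bij := by
    classical
    rw [Fintype.bijective_iff_injective_and_card]
    constructor
    · rintro ⟨r, j⟩ ⟨r', j'⟩ h
      dsimp only at h
      have hmem := Finset.orderEmbOfFin_mem
        (Finset.univ.filter (fun i => w i = rowLetter r)) (hcnt _) j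
      have hmem' := Finset.orderEmbOfFin_mem
        (Finset.univ.filter (fun i => w i = rowLetter r')) (hcnt _) j'
      rw [Finset.mem_filter] at hmem hmem'
      have hrr : rowLetter r = rowLetter r' := by rw [← hmem.2, h, hmem'.2]
      have hr : r = r' := rowLetter_inj hrr
      subst hr
      have hj : j = j' := ((Finset.univ.filter
        (fun i => w i = rowLetter r)).orderEmbOfFin (hcnt _)).injective h
      rw [hj]
    · simp
  row_inc := fun r =>
    ((Finset.univ.filter (fun i => w i = rowLetter r)).orderEmbOfFin (hcnt _)).strictMono
  col_inc := by
    intro j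
    have h01 : (Finset.univ.filter (fun i => w i = rowLetter 0)).orderEmbOfFin (hcnt _) j <
        (Finset.univ.filter (fun i => w i = rowLetter 1)).orderEmbOfFin (hcnt _) j := by
      have : rowLetter 0 = 2 := rfl
      exact emb_lt_emb (by decide) (fun k => (hlat k).1) (hcnt _) (hcnt _) j
    have h12 : (Finset.univ.filter (fun i => w i = rowLetter 1)).orderEmbOfFin (hcnt _) j <
        (Finset.univ.filter (fun i => w i = rowLetter 2)).orderEmbOfFin (hcnt _) j :=
      emb_lt_emb (by decide) (fun k => (hlat k).2) (hcnt _) (hcnt _) j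
    intro r r' hrr
    dsimp only
    rcases fin3_cases r with h | h | h <;> rcases fin3_cases r' with h' | h' | h' <;>
      subst h <;> subst h'
    · exact absurd hrr (by decide)
    · exact h01
    · exact lt_trans h01 h12
    · exact absurd hrr (by decide)
    · exact absurd hrr (by decide)
    · exact h12
    · exact absurd hrr (by decide)
    · exact absurd hrr (by decide)
    · exact absurd hrr (by decide)

/-- The equivalence underlying a standard Young tableau. -/
noncomputable def sytEquiv (T : SYT3 n) : (Fin 3 × Fin n) ≃ Fin (3 * n) :=
  Equiv.ofBijective _ T.bij

/-- The boundary word of a standard Young tableau. -/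
noncomputable def wordOfSyt (T : SYT3 n) : Fin (3 * n) → Fin 3 :=
  fun i => rowLetter ((sytEquiv T).symm i).1

lemma sytEquiv_symm_entry (T : SYT3 n) (r : Fin 3) (j : Fin n) :
    (sytEquiv T).symm (T.entry r j) = (r, j) := by
  rw [Equiv.symm_apply_eq]
  rfl

lemma wordOfSyt_entry (T : SYT3 n) (r : Fin 3) (j : Fin n) :
    wordOfSyt T (T.entry r j) = rowLetter r := by
  rw [wordOfSyt, sytEquiv_symm_entry]

lemma entry_symm (T : SYT3 n) (i : Fin (3 * n)) :
    T.entry ((sytEquiv T).symm i).1 ((sytEquiv T).symm i).2 = i :=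
  (sytEquiv T).apply_symm_apply i

lemma row_eq_of_word {T : SYT3 n} {i : Fin (3 * n)} {ℓ : Fin 3} (h : wordOfSyt T i = ℓ) :
    ((sytEquiv T).symm i).1 = rowLetter ℓ := by
  rw [wordOfSyt] at h
  rw [← rowLetter_invol ((sytEquiv T).symm i).1, h]

variable (T : SYT3 n)

lemma wcount (ℓ : Fin 3) : (Finset.univ.filter (fun i => wordOfSyt T i = ℓ)).card = n := by
  classical
  have himg : (Finset.univ.filter (fun i => wordOfSyt T i = ℓ)) =
      (Finset.univ : Finset (Fin n)).image (T.entry (rowLetter ℓ)) := by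
    ext i
    simp only [Finset.mem_filter, Finset.mem_univ, true_and, Finset.mem_image]
    constructor
    · intro h
      refine ⟨((sytEquiv T).symm i).2, ?_⟩
      rw [← row_eq_of_word h]
      exact entry_symm T i
    · rintro ⟨j, rfl⟩
      rw [wordOfSyt_entry, rowLetter_invol]
  rw [himg, Finset.card_image_of_injective _ (T.row_inc _).injective, Finset.card_univ,
    Fintype.card_fin]

lemma wlattice_aux {r r' : Fin 3} (hrr : r < r') (k : ℕ) :
    pcount (wordOfSyt T) k (rowLetter r') ≤ pcount (wordOfSyt T) k (rowLetter r) := by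
  classical
  unfold pcount
  apply Finset.card_le_card_of_injOn (fun i => T.entry r ((sytEquiv T).symm i).2)
  · intro i hi'
    rw [Finset.mem_coe, Finset.mem_filter] at hi'
    obtain ⟨-, hlt, hw⟩ := hi'
    simp only [Finset.mem_coe, Finset.mem_filter]
    refine ⟨Finset.mem_univ _, ?_, ?_⟩
    · have h1 : T.entry r ((sytEquiv T).symm i).2 < T.entry r' ((sytEquiv T).symm i).2 :=
        T.col_inc ((sytEquiv T).symm i).2 hrr
      have h2 : T.entry r' ((sytEquiv T).symm i).2 = i := by
        have hr := row_eq_of_word hw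
        rw [rowLetter_invol] at hr
        rw [← hr]
        exact entry_symm T i
      rw [h2] at h1
      have : (T.entry r ((sytEquiv T).symm i).2).val < i.val := h1
      omega
    · rw [wordOfSyt_entry]
  · intro i hi' i' hii' h
    simp only [Finset.coe_filter] at hi' hii'
    dsimp only at h
    have hj : ((sytEquiv T).symm i).2 = ((sytEquiv T).symm i').2 := (T.row_inc r).injective h
    have e1 : T.entry r' ((sytEquiv T).symm i).2 = i := by
      have hr := row_eq_of_word hi'.2.2
      rw [rowLetter_invol] at hr
      rw [← hr]; exact entry_symm T i
    have e2 : T.entry r' ((sytEquiv T).symm i').2 = i' := by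
      have hr := row_eq_of_word hii'.2.2
      rw [rowLetter_invol] at hr
      rw [← hr]; exact entry_symm T i'
    rw [← e1, ← e2, hj]

lemma wlattice : IsLatticeWord (wordOfSyt T) := by
  intro k
  constructor
  · exact wlattice_aux T (show (0 : Fin 3) < 1 by decide) k
  · exact wlattice_aux T (show (1 : Fin 3) < 2 by decide) k

end SYT


section Final

lemma SYT3.ext' {T T' : SYT3 n} (h : T.entry = T'.entry) : T = T' := by
  cases T
  cases T'
  simp only at h
  subst h
  rfl

variable {w : Fin (3 * n) → Fin 3}

lemma wordOfSyt_sytOfWord (hlat : IsLatticeWord w)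
    (hcnt : ∀ ℓ : Fin 3, (Finset.univ.filter (fun i => w i = ℓ)).card = n) :
    wordOfSyt (sytOfWord w hlat hcnt) = w := by
  funext i
  set T := sytOfWord w hlat hcnt with hT
  have h1 : T.entry ((sytEquiv T).symm i).1 ((sytEquiv T).symm i).2 = i := entry_symm T i
  have h2 : w (T.entry ((sytEquiv T).symm i).1 ((sytEquiv T).symm i).2)
      = rowLetter ((sytEquiv T).symm i).1 := by
    have := Finset.orderEmbOfFin_mem
      (Finset.univ.filter (fun x => w x = rowLetter ((sytEquiv T).symm i).1)) (hcnt _)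
      ((sytEquiv T).symm i).2
    exact (Finset.mem_filter.1 this).2
  rw [h1] at h2
  rw [wordOfSyt, h2]

lemma sytOfWord_wordOfSyt (T : SYT3 n) :
    sytOfWord (wordOfSyt T) (wlattice T) (wcount T) = T := by
  apply SYT3.ext'
  funext r j
  have hu : T.entry r = fun j => (Finset.univ.filter
      (fun i => wordOfSyt T i = rowLetter r)).orderEmbOfFin (wcount T _) j := by
    apply Finset.orderEmbOfFin_unique
    · intro x
      rw [Finset.mem_filter]
      exact ⟨Finset.mem_univ _, wordOfSyt_entry T r x⟩
    · exact T.row_inc r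
  show (Finset.univ.filter
      (fun i => wordOfSyt T i = rowLetter r)).orderEmbOfFin (wcount T _) j = T.entry r j
  rw [hu]

lemma buildM_congr {w w' : Fin (3 * n) → Fin 3} (h : w = w')
    (h1 : IsLatticeWord w) (h2 : ∀ ℓ : Fin 3, (Finset.univ.filter (fun i => w i = ℓ)).card = n)
    (h3 : IsLatticeWord w') (h4 : ∀ ℓ : Fin 3,
      (Finset.univ.filter (fun i => w' i = ℓ)).card = n) :
    buildM w h1 h2 = buildM w' h3 h4 := by
  subst h
  rfl

lemma sytOfWord_congr {w w' : Fin (3 * n) → Fin 3} (h : w = w')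
    (h1 : IsLatticeWord w) (h2 : ∀ ℓ : Fin 3, (Finset.univ.filter (fun i => w i = ℓ)).card = n)
    (h3 : IsLatticeWord w') (h4 : ∀ ℓ : Fin 3,
      (Finset.univ.filter (fun i => w' i = ℓ)).card = n) :
    sytOfWord w h1 h2 = sytOfWord w' h3 h4 := by
  subst h
  rfl

end Final

end MProof

/-- Every lattice word with exactly `n` of each letter is the boundary word of
some M-diagram on `3n` points; combined with injectivity, M-diagrams on `3n`
points are in bijection with standard Young tableaux of shape `(n,n,n)`. -/
theorem stmt11 (n : ℕ) :
    (∀ w : Fin (3 * n) → Fin 3, IsLatticeWord w →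
      (∀ ℓ : Fin 3, (Finset.univ.filter (fun i => w i = ℓ)).card = n) →
      ∃ m : MDiagram n, mword m = w) ∧
    Nonempty (MDiagram n ≃ SYT3 n) := by
  constructor
  · intro w hlat hcnt
    exact ⟨MProof.buildM w hlat hcnt, MProof.mword_buildM hlat hcnt⟩
  · refine ⟨⟨fun m => MProof.sytOfWord (mword m) (MProof.mlattice m) (MProof.mcount m),
      fun T => MProof.buildM (MProof.wordOfSyt T) (MProof.wlattice T) (MProof.wcount T),
      ?_, ?_⟩⟩
    · intro m
      dsimp only
      rw [MProof.buildM_congr (MProof.wordOfSyt_sytOfWord (MProof.mlattice m) (MProof.mcount m))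
        _ _ (MProof.mlattice m) (MProof.mcount m)]
      exact (MProof.m_eq_buildM m).symm
    · intro T
      dsimp only
      rw [MProof.sytOfWord_congr (MProof.mword_buildM (MProof.wlattice T) (MProof.wcount T))
        _ _ (MProof.wlattice T) (MProof.wcount T)]
      exact MProof.sytOfWord_wordOfSyt T
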